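/- For the sequence x_0 = x, x_1 = y, x_{i+2} = x_i * x_{i+1} in an involutory quandle, x_i = x^((xy)^(i/2)) if i is even and x_i = y^((xy)^((i-1)/2)) if i is odd. -/
import Mathlib


/-- A quandle: a set with a binary operation `act` (written `x * y`), a dual operation
`inv` (written `x *⁻¹ y`), satisfying idempotency, right-invertibility
(`(x*y) *⁻¹ y = (x *⁻¹ y) * y = x`) and self-distributivity. -/
structure Quandle' (Q : Type u) where
  act : Q → Q → Q
  inv : Q → Q → Q
  idem : ∀ x : Q, act x x = x
  act_inv : ∀ x y : Q, inv (act x y) y = x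
  inv_act : ∀ x y : Q, act (inv x y) y = x
  distrib : ∀ x y z : Q, act (act x y) z = act (act x z) (act y z)

/-- A left-order on a quandle: a strict linear order `r` such that `x < y` implies
`z * x < z * y` for all `z`. -/
def Quandle'.IsLeftOrder {Q : Type u} (q : Quandle' Q) (r : Q → Q → Prop) : Prop :=
  IsStrictTotalOrder Q r ∧ ∀ x y z : Q, r x y → r (q.act z x) (q.act z y)

/-- An involutory quandle: `(x*y)*y = x` for all `x, y`. -/
def Quandle'.Involutory {Q : Type u} (q : Quandle' Q) : Prop :=
  ∀ x y : Q, q.act (q.act x y) y = x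

/-- for the sequence `x₀ = x`, `x₁ = y`, `x_{i+2} = x_i * x_{i+1}` in an
involutory quandle, `x_i = x^((xy)^(i/2))` if `i` is even and `x_i = y^((xy)^((i-1)/2))`
if `i` is odd, where acting by the word `(xy)^k` is the `k`-th iterate of `a ↦ (a*x)*y`. -/
theorem stmt_13 {Q : Type u} (q : Quandle' Q) (hinv : q.Involutory)
    (x y : Q) (s : ℕ → Q) (h0 : s 0 = x) (h1 : s 1 = y)
    (hs : ∀ i : ℕ, s (i + 2) = q.act (s i) (s (i + 1))) :
    ∀ i : ℕ,
      (Even i → s i = (fun a : Q => q.act (q.act a x) y)^[i / 2] x) ∧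
      (Odd i → s i = (fun a : Q => q.act (q.act a x) y)^[(i - 1) / 2] y) := by
  set f : Q → Q := fun a : Q => q.act (q.act a x) y with hf
  have hhom : ∀ (k : ℕ) (a b : Q), q.act (f^[k] a) (f^[k] b) = f^[k] (q.act a b) := by
    intro k
    induction k with
    | zero => intro a b; simp only [Function.iterate_zero, id_eq]
    | succ n ih =>
      intro a b
      simp only [Function.iterate_succ_apply]
      have : f (q.act a b) = q.act (f a) (f b) := by
        show q.act (q.act (q.act a b) x) y
            = q.act (q.act (q.act a x) y) (q.act (q.act b x) y)
        rw [q.distrib a b x, q.distrib]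
      rw [this, ih]
  have hfx : f x = q.act x y := by
    show q.act (q.act x x) y = q.act x y
    rw [q.idem]
  have hfy : f y = q.act y (q.act x y) := by
    show q.act (q.act y x) y = q.act y (q.act x y)
    rw [q.distrib, q.idem]
  have key : ∀ k : ℕ, s (2 * k) = f^[k] x ∧ s (2 * k + 1) = f^[k] y := by
    intro k
    induction k with
    | zero =>
      refine ⟨?_, ?_⟩
      · simpa using h0
      · simpa using h1
    | succ n ih =>
      have h4 : s (2 * n + 2) = f^[n + 1] x := by
        rw [hs, ih.1, ih.2, hhom, ← hfx, ← Function.iterate_succ_apply]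
      have h5 : s (2 * n + 3) = f^[n + 1] y := by
        have := hs (2 * n + 1)
        rw [show 2 * n + 1 + 2 = 2 * n + 3 from by ring,
            show 2 * n + 1 + 1 = 2 * n + 2 from by ring] at this
        rw [this, ih.2, h4, Function.iterate_succ_apply, hfx, hhom, ← hfy,
            ← Function.iterate_succ_apply]
      refine ⟨?_, ?_⟩
      · rw [show 2 * (n + 1) = 2 * n + 2 from by ring]; exact h4
      · rw [show 2 * (n + 1) + 1 = 2 * n + 3 from by ring]; exact h5
  intro i
  constructor
  · rintro ⟨k, hk⟩
    have hik : i = 2 * k := by omega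
    subst hik
    rw [show 2 * k / 2 = k from by omega]
    exact (key k).1
  · rintro ⟨k, hk⟩
    subst hk
    rw [show (2 * k + 1 - 1) / 2 = k from by omega]
    exact (key k).2
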